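/- arXiv:1303.0235 — 5 statements merged into one kernel-verified Lean document; each statement's English description precedes it below -/
import Mathlib

section
/- Let φ : [0,∞) → [0,∞) be regressive, super-additive, and complementary coercive. Let (θ_n)_{n≥0} and (δ_n)_{n≥0} be sequences in [0,∞) such that θ_{m+1} ≤ φ(θ_m) + δ_m − δ_{m+1} for all m ≥ 0. Then the series ∑_n θ_n converges. -/
/-- Lemma 1 of the paper: if `φ : [0,∞) → [0,∞)` is regressive, super-additive
and complementary coercive, and nonnegative sequences `θ`, `δ` satisfy
`θ (m+1) ≤ φ (θ m) + δ m - δ (m+1)` for all `m`, then `∑ θ n` converges. -/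
theorem series_convergence_lemma (φ : ℝ → ℝ)
    (hnn : ∀ t, 0 ≤ t → 0 ≤ φ t)
    (hreg0 : φ 0 = 0) (hreg : ∀ t, 0 < t → φ t < t)
    (hsuper : ∀ t s, 0 ≤ t → 0 ≤ s → φ t + φ s ≤ φ (t + s))
    (hcoer : Filter.Tendsto (fun t => t - φ t) Filter.atTop Filter.atTop)
    (θ δ : ℕ → ℝ) (hθ0 : ∀ n, 0 ≤ θ n) (hδ0 : ∀ n, 0 ≤ δ n)
    (hrec : ∀ m : ℕ, θ (m + 1) ≤ φ (θ m) + δ m - δ (m + 1)) :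
    Summable θ := by
  set S : ℕ → ℝ := fun n => ∑ k ∈ Finset.range n, θ k with hS
  have hS0 : ∀ n, 0 ≤ S n := fun n => Finset.sum_nonneg fun i _ => hθ0 i
  -- φ is monotone on nonnegatives
  have hmono : ∀ a b : ℝ, 0 ≤ a → a ≤ b → φ a ≤ φ b := by
    intro a b ha hab
    have := hsuper a (b - a) ha (by linarith)
    have h2 := hnn (b - a) (by linarith)
    have : φ a + φ (b - a) ≤ φ b := by simpa using this
    linarith
  -- superadditivity on sums
  have hsum : ∀ n, ∑ m ∈ Finset.range n, φ (θ m) ≤ φ (S n) := by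
    intro n
    induction n with
    | zero => simp [hS, hreg0]
    | succ n ih =>
      rw [Finset.sum_range_succ]
      have : φ (S n) + φ (θ n) ≤ φ (S n + θ n) := hsuper _ _ (hS0 n) (hθ0 n)
      have hSn : S (n + 1) = S n + θ n := Finset.sum_range_succ θ n
      rw [hSn]; linarith
  -- key bound: S (n+1) - φ (S (n+1)) ≤ θ 0 + δ 0
  have hkey : ∀ n, S n - φ (S n) ≤ θ 0 + δ 0 := by
    intro n
    match n with
    | 0 => simp [hS, hreg0]; exact add_nonneg (hθ0 0) (hδ0 0)
    | Nat.succ n =>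
      have htel : ∑ m ∈ Finset.range n, θ (m + 1) ≤
          (∑ m ∈ Finset.range n, φ (θ m)) + (δ 0 - δ n) := by
        have h1 : ∑ m ∈ Finset.range n, θ (m + 1) ≤
            ∑ m ∈ Finset.range n, (φ (θ m) + (δ m - δ (m + 1))) := by
          apply Finset.sum_le_sum
          intro i _
          have := hrec i; linarith
        rw [Finset.sum_add_distrib, Finset.sum_range_sub' δ n] at h1
        exact h1
      have hshift : S (n + 1) = θ 0 + ∑ m ∈ Finset.range n, θ (m + 1) := by
        have h0 : S (n + 1) = ∑ k ∈ Finset.range (n + 1), θ k := rfl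
        rw [h0, Finset.sum_range_succ' θ n]
        ring
      have h2 : S (n + 1) ≤ θ 0 + φ (S n) + δ 0 - δ n := by
        have := hsum n
        rw [hshift]; linarith
      have hSmono : S n ≤ S (n + 1) := by
        have : S (n + 1) = S n + θ n := Finset.sum_range_succ θ n
        have := hθ0 n; linarith
      have h3 : φ (S n) ≤ φ (S (n + 1)) := hmono _ _ (hS0 n) hSmono
      have := hδ0 n
      linarith
  -- coercivity bounds S
  rcases (hcoer.eventually_gt_atTop (θ 0 + δ 0)).exists_forall_of_atTop with ⟨C, hC⟩
  apply summable_of_sum_range_le hθ0 (c := C)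
  intro n
  by_contra h
  push_neg at h
  exact absurd (hkey n) (by simpa using not_le.2 (hC (S n) h.le))
end

section
/- Let (X,d) be a metric space, S, T : X → X selfmaps, φ : [0,∞) → [0,∞) regressive, super-additive, and complementary coercive, and γ : X × X → [0,∞) a map satisfying d(Sx,Ty) ≤ φ(d(x,y)) + γ(x,y) − γ(Sx,Ty) for all x, y ∈ X. Then for all x₀, y₀ ∈ X, the series ∑_n d(Sⁿx₀, Tⁿy₀) converges. -/
/-- First step of the proof of the main theorem: under the contractive
condition `d(Sx,Ty) ≤ φ(d(x,y)) + γ(x,y) - γ(Sx,Ty)` with `φ` regressive,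
super-additive and complementary coercive and `γ ≥ 0`, the series
`∑ n, d(Sⁿx₀, Tⁿy₀)` converges for all `x₀, y₀`. -/
theorem series_of_iterates_summable {X : Type*} [MetricSpace X]
    (S T : X → X)
    (φ : ℝ → ℝ) (hφnn : ∀ t, 0 ≤ t → 0 ≤ φ t)
    (hreg0 : φ 0 = 0) (hreg : ∀ t, 0 < t → φ t < t)
    (hsuper : ∀ t s, 0 ≤ t → 0 ≤ s → φ t + φ s ≤ φ (t + s))
    (hcoer : Filter.Tendsto (fun t => t - φ t) Filter.atTop Filter.atTop)
    (γ : X → X → ℝ) (hγ0 : ∀ x y, 0 ≤ γ x y)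
    (hcontr : ∀ x y : X,
      dist (S x) (T y) ≤ φ (dist x y) + γ x y - γ (S x) (T y)) :
    ∀ x₀ y₀ : X, Summable (fun n : ℕ => dist (S^[n] x₀) (T^[n] y₀)) := by
  intro x₀ y₀
  set a : ℕ → ℝ := fun n => dist (S^[n] x₀) (T^[n] y₀) with ha
  set g : ℕ → ℝ := fun n => γ (S^[n] x₀) (T^[n] y₀) with hg
  have hann : ∀ n, 0 ≤ a n := fun n => dist_nonneg
  have hgnn : ∀ n, 0 ≤ g n := fun n => hγ0 _ _
  -- monotonicity of φ on nonnegatives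
  have hmono : ∀ t s : ℝ, 0 ≤ t → t ≤ s → φ t ≤ φ s := by
    intro t s ht hts
    have h := hsuper t (s - t) ht (by linarith)
    have h2 : 0 ≤ φ (s - t) := hφnn _ (by linarith)
    have : t + (s - t) = s := by ring
    rw [this] at h
    linarith
  -- key recurrence
  have hrec : ∀ n, a (n + 1) ≤ φ (a n) + g n - g (n + 1) := by
    intro n
    have := hcontr (S^[n] x₀) (T^[n] y₀)
    simpa [ha, hg, Function.iterate_succ_apply'] using this
  -- superadditivity for finite sums
  have hsum : ∀ n, (∑ k ∈ Finset.range n, φ (a k)) ≤ φ (∑ k ∈ Finset.range n, a k) := by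
    intro n
    induction n with
    | zero => simp [hreg0]
    | succ n ih =>
      rw [Finset.sum_range_succ, Finset.sum_range_succ]
      have h1 : 0 ≤ ∑ k ∈ Finset.range n, a k :=
        Finset.sum_nonneg fun i _ => hann i
      have := hsuper (∑ k ∈ Finset.range n, a k) (a n) h1 (hann n)
      linarith
  set P : ℕ → ℝ := fun n => ∑ k ∈ Finset.range n, a k with hP
  have hPnn : ∀ n, 0 ≤ P n := fun n => Finset.sum_nonneg fun i _ => hann i
  -- partial sum bound
  have hkey : ∀ n, P n - φ (P n) ≤ a 0 + g 0 := by
    intro n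
    match n with
    | 0 => simp only [hP, Finset.range_zero, Finset.sum_empty, hreg0]; linarith [hann 0, hgnn 0]
    | Nat.succ m =>
      have hshift : P (m + 1) = a 0 + ∑ k ∈ Finset.range m, a (k + 1) := by
        simp only [hP, Finset.sum_range_succ']; ring
      have h1 : (∑ k ∈ Finset.range m, a (k + 1)) ≤
          (∑ k ∈ Finset.range m, (φ (a k) + g k - g (k + 1))) :=
        Finset.sum_le_sum fun i _ => hrec i
      have h2 : (∑ k ∈ Finset.range m, (φ (a k) + g k - g (k + 1)))
          = (∑ k ∈ Finset.range m, φ (a k)) + (g 0 - g m) := by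
        have he : ∀ k ∈ Finset.range m, φ (a k) + g k - g (k + 1)
            = φ (a k) + (g k - g (k + 1)) := by intros; ring
        rw [Finset.sum_congr rfl he, Finset.sum_add_distrib, Finset.sum_range_sub' g]
      have h3 := hsum m
      have h4 : P m ≤ P (m + 1) := by
        simp only [hP, Finset.sum_range_succ]
        linarith [hann m]
      have h5 : φ (P m) ≤ φ (P (m + 1)) := hmono _ _ (hPnn m) h4
      have h6 : 0 ≤ g m := hgnn m
      rw [hshift] at *
      linarith
  -- bound from coercivity
  obtain ⟨M, hM⟩ := (Filter.tendsto_atTop.mp hcoer (a 0 + g 0 + 1)).exists_forall_of_atTop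
  have hbound : ∀ n, P n ≤ M := by
    intro n
    by_contra h
    push_neg at h
    have := hM (P n) h.le
    have := hkey n
    linarith
  exact summable_of_sum_range_le hann hbound
end

section
/- Let (X,d) be a metric space, S, T : X → X selfmaps, φ : [0,∞) → [0,∞) regressive, super-additive, and complementary coercive, and γ : X × X → [0,∞) a map satisfying d(Sx,Ty) ≤ φ(d(x,y)) + γ(x,y) − γ(Sx,Ty) for all x, y ∈ X. Then for each x₀ ∈ X, the sequence (Sⁿx₀)_{n≥0} is a Cauchy sequence, and for each y₀ ∈ X, the sequence (Tⁿy₀)_{n≥0} is a Cauchy sequence. -/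
/-- Iterated super-additivity: `m * φ t ≤ φ (m * t)`. -/
theorem iterates_cauchy_phi_mul {φ : ℝ → ℝ} (hreg0 : φ 0 = 0)
    (hsuper : ∀ t s, 0 ≤ t → 0 ≤ s → φ t + φ s ≤ φ (t + s)) :
    ∀ (m : ℕ) (t : ℝ), 0 ≤ t → (m : ℝ) * φ t ≤ φ ((m : ℝ) * t) := by
  intro m
  induction m with
  | zero => intro t ht; simp [hreg0]
  | succ n ih =>
      intro t ht
      have h1 := ih t ht
      have h2 := hsuper ((n : ℝ) * t) t (by positivity) ht
      have h3 : ((n : ℝ) + 1) * t = (n : ℝ) * t + t := by ring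
      push_cast
      rw [h3]
      linarith

/-- Uniform positive lower bound for `ψ = id - φ` on `[ε, ∞)`. -/
theorem iterates_cauchy_psi_lb {φ : ℝ → ℝ} (hreg0 : φ 0 = 0)
    (hsuper : ∀ t s, 0 ≤ t → 0 ≤ s → φ t + φ s ≤ φ (t + s))
    (hcoer : Filter.Tendsto (fun t => t - φ t) Filter.atTop Filter.atTop) :
    ∀ ε : ℝ, 0 < ε → ∃ c : ℝ, 0 < c ∧ ∀ t : ℝ, ε ≤ t → c ≤ t - φ t := by
  intro ε hε
  obtain ⟨R, hR⟩ := (hcoer.eventually_ge_atTop 1).exists_forall_of_atTop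
  set m : ℕ := max 1 ⌈R / ε⌉₊ with hm
  have hm1 : 1 ≤ m := le_max_left _ _
  have hmpos : (0:ℝ) < (m:ℝ) := by exact_mod_cast Nat.lt_of_lt_of_le Nat.zero_lt_one hm1
  refine ⟨1 / m, by positivity, fun t ht => ?_⟩
  have htpos : 0 < t := lt_of_lt_of_le hε ht
  have hRm : R ≤ (m : ℝ) * t := by
    have h1 : R / ε ≤ (m : ℝ) := by
      calc R / ε ≤ (⌈R / ε⌉₊ : ℝ) := Nat.le_ceil _
        _ ≤ (m : ℝ) := by exact_mod_cast le_max_right _ _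
    calc R = (R / ε) * ε := by field_simp
      _ ≤ (m : ℝ) * t := by
          apply mul_le_mul h1 ht (le_of_lt hε) (le_of_lt hmpos)
  have h2 : 1 ≤ (m : ℝ) * t - φ ((m : ℝ) * t) := hR _ hRm
  have h3 := iterates_cauchy_phi_mul hreg0 hsuper m t (le_of_lt htpos)
  have : 1 ≤ (m : ℝ) * (t - φ t) := by nlinarith
  rw [div_le_iff₀ hmpos]
  linarith [mul_comm ((m:ℝ)) (t - φ t)]

/-- `φ` is a linear contraction on every bounded range. -/
theorem iterates_cauchy_phi_linear {φ : ℝ → ℝ} (hreg0 : φ 0 = 0)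
    (hsuper : ∀ t s, 0 ≤ t → 0 ≤ s → φ t + φ s ≤ φ (t + s))
    (hpsi : ∀ ε : ℝ, 0 < ε → ∃ c : ℝ, 0 < c ∧ ∀ t : ℝ, ε ≤ t → c ≤ t - φ t) :
    ∀ B : ℝ, 0 < B → ∃ q : ℝ, 0 ≤ q ∧ q < 1 ∧ ∀ t : ℝ, 0 ≤ t → t ≤ B → φ t ≤ q * t := by
  intro B hB
  obtain ⟨c, hc, hcb⟩ := hpsi B hB
  set r := min c B with hr
  have hrpos : 0 < r := lt_min hc hB
  have hrB : r ≤ B := min_le_right _ _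
  have h2B' : (0:ℝ) < 2 * B := by linarith
  refine ⟨1 - r / (2 * B), by
    have hd : r / (2*B) ≤ 1 := by
      rw [div_le_one h2B']
      linarith
    linarith, by
    have hd : 0 < r / (2*B) := by positivity
    linarith, ?_⟩
  intro t ht htB
  rcases eq_or_lt_of_le ht with h0 | h0
  · simp [← h0, hreg0]
  set n : ℕ := ⌈B / t⌉₊ with hn
  have hn1 : 1 ≤ n := Nat.one_le_ceil_iff.mpr (by positivity)
  have hnpos : (0:ℝ) < (n:ℝ) := by exact_mod_cast hn1
  have hBt : B ≤ (n:ℝ) * t := by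
    calc B = (B / t) * t := by field_simp
      _ ≤ (n:ℝ) * t := by
        apply mul_le_mul_of_nonneg_right (Nat.le_ceil _) (le_of_lt h0)
  have hub : (n:ℝ) ≤ 2 * B / t := by
    have h1 : (n:ℝ) < B / t + 1 := Nat.ceil_lt_add_one (by positivity)
    have h2 : (1:ℝ) ≤ B / t := (one_le_div h0).mpr htB
    have : 2 * B / t = B / t + B / t := by ring
    linarith
  have hpsin : c ≤ (n:ℝ) * t - φ ((n:ℝ) * t) := hcb _ hBt
  have hmul := iterates_cauchy_phi_mul hreg0 hsuper n t ht
  have key : c ≤ (n:ℝ) * (t - φ t) := by nlinarith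
  have hnle : (n:ℝ) * t ≤ 2 * B := by
    rw [le_div_iff₀ h0] at hub
    linarith
  have h4 : r * t ≤ (2 * B) * (t - φ t) := by
    have hpsit : 0 ≤ t - φ t := by nlinarith
    calc r * t ≤ c * t := by nlinarith [min_le_left c B]
      _ ≤ ((n:ℝ) * (t - φ t)) * t := by nlinarith
      _ = ((n:ℝ) * t) * (t - φ t) := by ring
      _ ≤ (2 * B) * (t - φ t) := by nlinarith
  have h5 : r / (2 * B) * t ≤ t - φ t := by
    rw [div_mul_eq_mul_div, div_le_iff₀ h2B']
    nlinarith
  nlinarith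

/-- The diagonal distances `d(Sⁿx, Tⁿy)` form a summable sequence. -/
theorem iterates_cauchy_summable {X : Type*} [MetricSpace X]
    (S T : X → X) (φ : ℝ → ℝ)
    (hreg0 : φ 0 = 0) (hreg : ∀ t, 0 < t → φ t < t)
    (hlin : ∀ B : ℝ, 0 < B → ∃ q : ℝ, 0 ≤ q ∧ q < 1 ∧ ∀ t : ℝ, 0 ≤ t → t ≤ B → φ t ≤ q * t)
    (γ : X → X → ℝ) (hγ0 : ∀ x y, 0 ≤ γ x y)
    (hcontr : ∀ x y : X,
      dist (S x) (T y) ≤ φ (dist x y) + γ x y - γ (S x) (T y))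
    (x y : X) : Summable (fun n : ℕ => dist (S^[n] x) (T^[n] y)) := by
  set a : ℕ → ℝ := fun n => dist (S^[n] x) (T^[n] y) with ha_def
  set g : ℕ → ℝ := fun n => γ (S^[n] x) (T^[n] y) with hg_def
  have ha : ∀ n, 0 ≤ a n := fun n => dist_nonneg
  have hg : ∀ n, 0 ≤ g n := fun n => hγ0 _ _
  have hφle : ∀ t : ℝ, 0 ≤ t → φ t ≤ t := by
    intro t ht
    rcases eq_or_lt_of_le ht with h | h
    · rw [← h, hreg0]
    · exact le_of_lt (hreg t h)
  have step : ∀ n, a (n + 1) + g (n + 1) ≤ φ (a n) + g n := by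
    intro n
    have h := hcontr (S^[n] x) (T^[n] y)
    simp only [← Function.iterate_succ_apply' S, ← Function.iterate_succ_apply' T] at h
    simp only [ha_def, hg_def]
    linarith
  set E : ℕ → ℝ := fun n => a n + g n with hE_def
  have hEmono : ∀ n, E (n + 1) ≤ E n := by
    intro n
    have := step n
    have := hφle (a n) (ha n)
    simp only [hE_def]
    linarith
  have hE0 : ∀ n, E n ≤ E 0 := by
    intro n
    induction n with
    | zero => exact le_rfl
    | succ k ih => exact le_trans (hEmono k) ih
  have haB : ∀ n, a n ≤ E 0 := fun n => by
    have := hg n; have := hE0 n; simp only [hE_def] at *; linarith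
  have hE0nn : 0 ≤ E 0 := by have := ha 0; have := hg 0; simp only [hE_def]; linarith
  obtain ⟨q, hq0, hq1, hq⟩ := hlin (E 0 + 1) (by linarith)
  have hstep2 : ∀ n, (1 - q) * a n ≤ E n - E (n + 1) := by
    intro n
    have h1 := step n
    have h2 := hq (a n) (ha n) (by linarith [haB n])
    simp only [hE_def]
    nlinarith
  have hpartial : ∀ N : ℕ, ∑ i ∈ Finset.range N, a i ≤ E 0 / (1 - q) := by
    intro N
    have h1 : (1 - q) * ∑ i ∈ Finset.range N, a i ≤ E 0 - E N := by
      induction N with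
      | zero => simp
      | succ k ih =>
          rw [Finset.sum_range_succ, mul_add]
          have := hstep2 k
          linarith
    have hEN : 0 ≤ E N := by have := ha N; have := hg N; simp only [hE_def]; linarith
    rw [le_div_iff₀ (by linarith : (0:ℝ) < 1 - q)]
    nlinarith
  exact summable_of_sum_range_le ha hpartial

/-- Intermediate claim in the proof of the main theorem: under the contractive
condition `d(Sx,Ty) ≤ φ(d(x,y)) + γ(x,y) - γ(Sx,Ty)` with `φ` regressive,
super-additive and complementary coercive and `γ ≥ 0`, every iterate sequence
`(Sⁿx₀)` and `(Tⁿy₀)` is Cauchy. -/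
theorem iterates_cauchy {X : Type*} [MetricSpace X]
    (S T : X → X)
    (φ : ℝ → ℝ) (hφnn : ∀ t, 0 ≤ t → 0 ≤ φ t)
    (hreg0 : φ 0 = 0) (hreg : ∀ t, 0 < t → φ t < t)
    (hsuper : ∀ t s, 0 ≤ t → 0 ≤ s → φ t + φ s ≤ φ (t + s))
    (hcoer : Filter.Tendsto (fun t => t - φ t) Filter.atTop Filter.atTop)
    (γ : X → X → ℝ) (hγ0 : ∀ x y, 0 ≤ γ x y)
    (hcontr : ∀ x y : X,
      dist (S x) (T y) ≤ φ (dist x y) + γ x y - γ (S x) (T y)) :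
    (∀ x₀ : X, CauchySeq (fun n : ℕ => S^[n] x₀)) ∧
    (∀ y₀ : X, CauchySeq (fun n : ℕ => T^[n] y₀)) := by
  have hpsi := iterates_cauchy_psi_lb hreg0 hsuper hcoer
  have hlin := iterates_cauchy_phi_linear hreg0 hsuper hpsi
  have hsum : ∀ x y : X, Summable (fun n : ℕ => dist (S^[n] x) (T^[n] y)) :=
    iterates_cauchy_summable S T φ hreg0 hreg hlin γ hγ0 hcontr
  constructor
  · intro x₀
    apply cauchySeq_of_summable_dist
    have hbig : Summable (fun n : ℕ =>
        dist (S^[n] x₀) (T^[n] x₀) + dist (S^[n] (S x₀)) (T^[n] x₀)) :=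
      (hsum x₀ x₀).add (hsum (S x₀) x₀)
    refine Summable.of_nonneg_of_le (fun n => dist_nonneg) (fun n => ?_) hbig
    · 
      show dist (S^[n] x₀) (S^[n + 1] x₀) ≤ _
      have h1 : S^[n + 1] x₀ = S^[n] (S x₀) := Function.iterate_succ_apply S n x₀
      rw [h1]
      calc dist (S^[n] x₀) (S^[n] (S x₀))
          ≤ dist (S^[n] x₀) (T^[n] x₀) + dist (T^[n] x₀) (S^[n] (S x₀)) := dist_triangle _ _ _
        _ = dist (S^[n] x₀) (T^[n] x₀) + dist (S^[n] (S x₀)) (T^[n] x₀) := by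
            rw [dist_comm (T^[n] x₀)]
  · intro y₀
    apply cauchySeq_of_summable_dist
    have hbig : Summable (fun n : ℕ =>
        dist (S^[n] y₀) (T^[n] y₀) + dist (S^[n] y₀) (T^[n] (T y₀))) :=
      (hsum y₀ y₀).add (hsum y₀ (T y₀))
    refine Summable.of_nonneg_of_le (fun n => dist_nonneg) (fun n => ?_) hbig
    · 
      show dist (T^[n] y₀) (T^[n + 1] y₀) ≤ _
      have h1 : T^[n + 1] y₀ = T^[n] (T y₀) := Function.iterate_succ_apply T n y₀
      rw [h1]
      calc dist (T^[n] y₀) (T^[n] (T y₀))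
          ≤ dist (T^[n] y₀) (S^[n] y₀) + dist (S^[n] y₀) (T^[n] (T y₀)) := dist_triangle _ _ _
        _ = dist (S^[n] y₀) (T^[n] y₀) + dist (S^[n] y₀) (T^[n] (T y₀)) := by
            rw [dist_comm (T^[n] y₀)]
end

section
/- Let (X,d) be a metric space, S, T : X → X selfmaps, φ : [0,∞) → [0,∞) regressive and complementary coercive, and γ : X × X → [0,∞) a map satisfying, for all x, y ∈ X and all n ≥ 1, the condition ∑_{j=1}^{n} d(Sʲx, Tʲy) ≤ φ(∑_{j=0}^{n-1} d(Sʲx, Tʲy)) + γ(x,y) − γ(Sⁿx, Tⁿy). Then for all x₀, y₀ ∈ X, the series ∑_n d(Sⁿx₀, Tⁿy₀) converges; moreover its partial sums are bounded by g(d(x₀,y₀) + γ(x₀,y₀)), where g(r) := sup{ t ≥ 0 : t − φ(t) ≤ r }. -/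
/-- Key intermediate claim in the proof of Theorem 5: under the summed
contractive condition, for all `x₀, y₀` the series `∑ n, d(Sⁿx₀,Tⁿy₀)`
converges, and its partial sums are bounded by
`g (d(x₀,y₀) + γ(x₀,y₀))`, where `g r = sup { t ≥ 0 : t - φ t ≤ r }`. -/
theorem summed_condition_summable {X : Type*} [MetricSpace X]
    (S T : X → X)
    (φ : ℝ → ℝ) (hφnn : ∀ t, 0 ≤ t → 0 ≤ φ t)
    (hreg0 : φ 0 = 0) (hreg : ∀ t, 0 < t → φ t < t)
    (hcoer : Filter.Tendsto (fun t => t - φ t) Filter.atTop Filter.atTop)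
    (γ : X → X → ℝ) (hγ0 : ∀ x y, 0 ≤ γ x y)
    (hcontr : ∀ x y : X, ∀ n : ℕ, 1 ≤ n →
      ∑ j ∈ Finset.Icc 1 n, dist (S^[j] x) (T^[j] y) ≤
        φ (∑ j ∈ Finset.range n, dist (S^[j] x) (T^[j] y)) +
          γ x y - γ (S^[n] x) (T^[n] y)) :
    ∀ x₀ y₀ : X,
      Summable (fun n : ℕ => dist (S^[n] x₀) (T^[n] y₀)) ∧
      ∀ n : ℕ, ∑ j ∈ Finset.range n, dist (S^[j] x₀) (T^[j] y₀) ≤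
        sSup {t : ℝ | 0 ≤ t ∧ t - φ t ≤ dist x₀ y₀ + γ x₀ y₀} := by
  intro x₀ y₀
  set a : ℕ → ℝ := fun j => dist (S^[j] x₀) (T^[j] y₀) with ha
  set r : ℝ := dist x₀ y₀ + γ x₀ y₀ with hr
  have hr0 : 0 ≤ r := add_nonneg dist_nonneg (hγ0 _ _)
  set A : Set ℝ := {t : ℝ | 0 ≤ t ∧ t - φ t ≤ r} with hA
  set P : ℕ → ℝ := fun n => ∑ j ∈ Finset.range n, a j with hP
  have hanonneg : ∀ j, 0 ≤ a j := fun j => dist_nonneg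
  have hPnn : ∀ n, 0 ≤ P n := fun n => Finset.sum_nonneg fun j _ => hanonneg j
  have hPmono : Monotone P := fun m n hmn =>
    Finset.sum_le_sum_of_subset_of_nonneg (Finset.range_subset_range.2 hmn)
      (fun j _ _ => hanonneg j)
  -- split the sum
  have hsplit : ∀ n : ℕ, P (n + 1) = a 0 + ∑ j ∈ Finset.Icc 1 n, a j := by
    intro n
    have h1 : Finset.Icc 1 n = Finset.Ico 1 (n + 1) := by
      rw [Finset.Ico_add_one_right_eq_Icc]
    rw [h1, hP]
    simp only [Finset.range_eq_Ico]
    rw [← Finset.sum_Ico_consecutive a (Nat.zero_le 1) (Nat.succ_le_succ (Nat.zero_le n))]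
    simp
  have ha0 : a 0 = dist x₀ y₀ := by simp [ha]
  -- key recursion: P (n+1) ≤ φ (P n) + r for n ≥ 1
  have hrec : ∀ n : ℕ, 1 ≤ n → P (n + 1) ≤ φ (P n) + r := by
    intro n hn
    have := hcontr x₀ y₀ n hn
    have h2 : ∑ j ∈ Finset.Icc 1 n, a j ≤ φ (P n) + γ x₀ y₀ := by
      calc ∑ j ∈ Finset.Icc 1 n, a j
          ≤ φ (P n) + γ x₀ y₀ - γ (S^[n] x₀) (T^[n] y₀) := this
        _ ≤ φ (P n) + γ x₀ y₀ := by linarith [hγ0 (S^[n] x₀) (T^[n] y₀)]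
    rw [hsplit n, ha0, hr]
    linarith
  -- every P n lies in A
  have hPA : ∀ n, P n ∈ A := by
    intro n
    refine ⟨hPnn n, ?_⟩
    rcases Nat.eq_zero_or_pos n with h0 | hpos
    · subst h0; simp [hP, hreg0, hr0]
    · have h1 := hrec n hpos
      have h2 : P n ≤ P (n + 1) := hPmono (Nat.le_succ n)
      linarith
  -- A is bounded above
  have hbdd : BddAbove A := by
    obtain ⟨M, hM⟩ := (hcoer.eventually_ge_atTop (r + 1)).exists_forall_of_atTop
    refine ⟨M, fun t ht => ?_⟩
    by_contra h
    push_neg at h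
    have := hM t h.le
    linarith [ht.2]
  have hAne : A.Nonempty := ⟨0, le_refl 0, by simp [hreg0, hr0]⟩
  have hbound : ∀ n, P n ≤ sSup A := fun n => le_csSup hbdd (hPA n)
  constructor
  · exact summable_of_sum_range_le hanonneg hbound
  · exact hbound
end

section
/- Let (t_n)_{n≥0} be a strictly increasing sequence in [0,∞) with t₀ = 0, t_n > 1 for n ≥ 1, and t_n/√(t_{n+1}) → ∞ as n → ∞. Define r_n := 1 − 1/√(t_n) for n ≥ 1, and define χ : [0,∞) → [0,∞) by χ(t) = r_{n+1} for t ∈ [t_n, t_{n+1}), and set φ(t) := t·χ(t). Then (r_n)_{n≥1} is a strictly increasing sequence in (0,1) with r_n → 1, the function φ is regressive, and φ is complementary coercive (i.e., t − φ(t) → ∞ as t → ∞). -/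
/-- Concrete construction of complementary coercive regressive functions
(end of Section 3): given a strictly increasing sequence `t` with `t 0 = 0`,
`t n > 1` for `n ≥ 1`, and `t n / √(t (n+1)) → ∞`, set `r n = 1 - 1/√(t n)`
and let `χ` take the value `r (n+1)` on `[t n, t (n+1))`, and `φ s = s * χ s`.
Then `(r n)` is strictly increasing in `(0,1)` with `r n → 1`, `φ` is
regressive, and `φ` is complementary coercive. -/
theorem piecewise_construction
    (t : ℕ → ℝ) (ht_mono : StrictMono t) (ht0 : t 0 = 0)
    (ht1 : ∀ n : ℕ, 1 ≤ n → 1 < t n)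
    (hratio : Filter.Tendsto (fun n => t n / Real.sqrt (t (n + 1)))
      Filter.atTop Filter.atTop)
    (r : ℕ → ℝ) (hr : ∀ n : ℕ, 1 ≤ n → r n = 1 - 1 / Real.sqrt (t n))
    (χ : ℝ → ℝ)
    (hχ : ∀ n : ℕ, ∀ s : ℝ, t n ≤ s → s < t (n + 1) → χ s = r (n + 1))
    (φ : ℝ → ℝ) (hφ : ∀ s : ℝ, 0 ≤ s → φ s = s * χ s) :
    (∀ n : ℕ, 1 ≤ n → 0 < r n ∧ r n < 1) ∧
    (∀ n : ℕ, 1 ≤ n → r n < r (n + 1)) ∧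
    Filter.Tendsto r Filter.atTop (nhds 1) ∧
    (φ 0 = 0 ∧ ∀ s : ℝ, 0 < s → φ s < s) ∧
    Filter.Tendsto (fun s => s - φ s) Filter.atTop Filter.atTop := by
  classical
  have hsq : ∀ n : ℕ, 1 ≤ n → 1 < Real.sqrt (t n) := by
    intro n hn
    have := ht1 n hn
    nlinarith [Real.sq_sqrt (le_of_lt (lt_trans one_pos this)),
      Real.sqrt_nonneg (t n)]
  have hrpos : ∀ n : ℕ, 1 ≤ n → 0 < r n ∧ r n < 1 := by
    intro n hn
    rw [hr n hn]
    have h1 := hsq n hn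
    constructor
    · have : 1 / Real.sqrt (t n) < 1 := by
        rw [div_lt_one (lt_trans one_pos h1)]; exact h1
      linarith
    · have : 0 < 1 / Real.sqrt (t n) := by positivity
      linarith
  have hrmono : ∀ n : ℕ, 1 ≤ n → r n < r (n + 1) := by
    intro n hn
    rw [hr n hn, hr (n + 1) (le_trans hn (Nat.le_succ n))]
    have h1 := hsq n hn
    have h2 : Real.sqrt (t n) < Real.sqrt (t (n + 1)) :=
      Real.sqrt_lt_sqrt (le_of_lt (lt_trans one_pos (ht1 n hn)))
        (ht_mono (Nat.lt_succ_self n))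
    have h3 : 1 / Real.sqrt (t (n + 1)) < 1 / Real.sqrt (t n) :=
      one_div_lt_one_div_of_lt (lt_trans one_pos h1) h2
    linarith
  have hsqtend : Filter.Tendsto (fun n => Real.sqrt (t n))
      Filter.atTop Filter.atTop := by
    apply Filter.tendsto_atTop_mono' _ _ hratio
    filter_upwards [Filter.eventually_ge_atTop 1] with n hn
    have h1 := hsq n hn
    have h3 : Real.sqrt (t n) ≤ Real.sqrt (t (n + 1)) :=
      Real.sqrt_le_sqrt (ht_mono (Nat.lt_succ_self n)).le
    have h4 : t n / Real.sqrt (t (n + 1)) ≤ t n / Real.sqrt (t n) := by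
      apply div_le_div_of_nonneg_left (le_of_lt (lt_trans one_pos (ht1 n hn)))
        (lt_trans one_pos h1) h3
    calc t n / Real.sqrt (t (n + 1)) ≤ t n / Real.sqrt (t n) := h4
      _ = Real.sqrt (t n) := Real.div_sqrt
  have htend : Filter.Tendsto t Filter.atTop Filter.atTop := by
    apply Filter.tendsto_atTop_mono' _ _ hsqtend
    filter_upwards [Filter.eventually_ge_atTop 1] with n hn
    have h1 := hsq n hn
    nlinarith [Real.sq_sqrt (le_of_lt (lt_trans one_pos (ht1 n hn)))]
  have hrlim : Filter.Tendsto r Filter.atTop (nhds 1) := by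
    have h0 : Filter.Tendsto (fun n => 1 - 1 / Real.sqrt (t n))
        Filter.atTop (nhds 1) := by
      have : Filter.Tendsto (fun n => 1 / Real.sqrt (t n))
          Filter.atTop (nhds 0) := hsqtend.inv_tendsto_atTop.congr (by
            intro n; simp [one_div])
      simpa using (tendsto_const_nhds.sub this)
    apply h0.congr'
    filter_upwards [Filter.eventually_ge_atTop 1] with n hn
    exact (hr n hn).symm
  -- existence of interval containing s
  have hex : ∀ s : ℝ, 0 ≤ s → ∃ n, t n ≤ s ∧ s < t (n + 1) := by
    intro s hs
    have h : ∃ m, s < t m := (htend.eventually_gt_atTop s).exists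
    let m := Nat.find h
    have hm : s < t m := Nat.find_spec h
    have hm0 : m ≠ 0 := by
      intro h0
      have : s < t 0 := by rw [← h0]; exact hm
      rw [ht0] at this; linarith
    obtain ⟨k, hk⟩ := Nat.exists_eq_succ_of_ne_zero hm0
    refine ⟨k, ?_, ?_⟩
    · by_contra hc
      push_neg at hc
      exact Nat.find_min h (m := k) (by omega) hc
    · rw [← Nat.succ_eq_add_one, ← hk]; exact hm
  refine ⟨hrpos, hrmono, hrlim, ⟨?_, ?_⟩, ?_⟩
  · rw [hφ 0 le_rfl]; ring
  · intro s hs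
    obtain ⟨n, hn1, hn2⟩ := hex s hs.le
    rw [hφ s hs.le, hχ n s hn1 hn2]
    have := (hrpos (n + 1) (Nat.le_add_left 1 n)).2
    nlinarith
  · rw [Filter.tendsto_atTop]
    intro C
    obtain ⟨N, hN⟩ := Filter.eventually_atTop.mp
      (hratio.eventually (Filter.eventually_ge_atTop C))
    filter_upwards [Filter.eventually_ge_atTop (max (t N) 0)] with s hs
    have hs0 : 0 ≤ s := le_trans (le_max_right _ _) hs
    have hsN : t N ≤ s := le_trans (le_max_left _ _) hs
    obtain ⟨n, hn1, hn2⟩ := hex s hs0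
    have hNn : N ≤ n := by
      have : t N < t (n + 1) := lt_of_le_of_lt hsN hn2
      have := ht_mono.lt_iff_lt.mp this
      omega
    have hC : C ≤ t n / Real.sqrt (t (n + 1)) := hN n hNn
    have hsq1 : 1 < Real.sqrt (t (n + 1)) := hsq (n + 1) (Nat.le_add_left 1 n)
    have hsqpos : 0 < Real.sqrt (t (n + 1)) := lt_trans one_pos hsq1
    rw [hφ s hs0, hχ n s hn1 hn2, hr (n + 1) (Nat.le_add_left 1 n)]
    have key : s - s * (1 - 1 / Real.sqrt (t (n + 1)))
        = s / Real.sqrt (t (n + 1)) := by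
      field_simp; ring
    rw [key]
    calc C ≤ t n / Real.sqrt (t (n + 1)) := hC
      _ ≤ s / Real.sqrt (t (n + 1)) := by gcongr
end
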